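/- Let R be a commutative integral domain and λ an infinite cardinal (index set). Then every maximal R-linearly independent subset S of R^λ has cardinality card(S) = card(R^λ). (Equivalently, the Lazarus dimension, and hence the Goldie dimension, of R^λ equals its cardinality.) -/

import Mathlib

universe u

open Cardinal Submodule Set Function

/-- The geometric sequences `(t^n)ₙ` for `t : K` form a linearly independent family
over a field `K`. -/
theorem linearIndependent_geom_aux (K : Type*) [Field K] :
    LinearIndependent K (fun (t : K) (n : ℕ) => t ^ n) := by
  classical
  rw [linearIndependent_iff']
  intro s g hg t ht
  set n := s.card with hn
  let σ : Fin n ≃ {x // x ∈ s} := s.equivFin.symm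
  let f : Fin n → K := fun j => (σ j : K)
  have hf : Function.Injective f := Subtype.val_injective.comp σ.injective
  have hgm : ∀ m : ℕ, ∑ x ∈ s, g x * x ^ m = 0 := by
    intro m
    simpa [Finset.sum_apply] using congr_fun hg m
  have hfv : ∀ i : Fin n, (∑ j : Fin n, g (f j) * f j ^ (i : ℕ)) = 0 := by
    intro i
    calc ∑ j : Fin n, g (f j) * f j ^ (i : ℕ)
        = ∑ y : {x // x ∈ s}, g (y : K) * (y : K) ^ (i : ℕ) :=
          Equiv.sum_comp σ (fun y => g (y : K) * (y : K) ^ (i : ℕ))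
      _ = ∑ x ∈ s, g x * x ^ (i : ℕ) := Finset.sum_coe_sort s (fun x => g x * x ^ (i : ℕ))
      _ = 0 := hgm i
  have hv0 := Matrix.eq_zero_of_forall_pow_sum_mul_pow_eq_zero hf hfv
  have hj := congr_fun hv0 (s.equivFin ⟨t, ht⟩)
  simp only [Pi.zero_apply] at hj
  rwa [show f (s.equivFin ⟨t, ht⟩) = t from by simp [f, σ]] at hj

/-- Let `R` be a commutative integral domain and `ι` an infinite index
set. Then every maximal `R`-linearly independent subset `S` of `R^ι` has cardinality
`card S = card (R^ι)`. (Equivalently, the Lazarus dimension, and hence the Goldie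
dimension, of `R^ι` equals its cardinality.) -/
theorem mk_maxLinearIndependent_eq_mk_pi (R : Type u) [CommRing R] [IsDomain R]
    (ι : Type u) [Infinite ι] (S : Set (ι → R))
    (hS : LinearIndependent R ((↑) : S → (ι → R)))
    (hmax : ∀ T : Set (ι → R), S ⊆ T → LinearIndependent R ((↑) : T → (ι → R)) → T = S) :
    Cardinal.mk S = Cardinal.mk (ι → R) := by
  classical
  let K := FractionRing R
  let φ : (ι → R) →ₗ[R] (ι → K) := LinearMap.compLeft (Algebra.linearMap R K) ι
  have hφ : Function.Injective φ := fun x y h => funext fun i =>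
    IsFractionRing.injective R K (congr_fun h i)
  have hφapp : ∀ (v : ι → R) (i : ι), φ v i = algebraMap R K (v i) := fun v i => rfl
  -- every vector has a nonzero multiple in the span of S
  have hstep : ∀ v : ι → R, ∃ r : R, r ≠ 0 ∧ r • v ∈ span R S := by
    intro v
    by_cases hv : v ∈ S
    · exact ⟨1, one_ne_zero, by rw [one_smul]; exact subset_span hv⟩
    set T : Set (ι → R) := insert v S with hT
    have hdep : ¬ LinearIndependent R (id ∘ ((↑) : T → (ι → R))) := by
      intro hind
      exact hv ((hmax _ (Set.subset_insert v S) hind) ▸ Set.mem_insert v S)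
    obtain ⟨f, supp_f, sum_f, f_ne⟩ := linearDepOn_iff.mp hdep
    have hfv : f v ≠ 0 := by
      intro h0
      have hsupp : f ∈ Finsupp.supported R R S := by
        intro x hx
        have hxS : (x : ι → R) ∈ T := supp_f hx
        rcases hxS with h | h
        · exact absurd (h ▸ (Finsupp.mem_support_iff.mp hx)) (not_ne_iff.mpr h0)
        · exact h
      exact linearDepOn_iff.mpr ⟨f, hsupp, sum_f, f_ne⟩ hS
    refine ⟨f v, hfv, ?_⟩
    have hv' : v ∈ f.support := Finsupp.mem_support_iff.mpr hfv
    rw [← Finset.insert_erase hv', Finset.sum_insert (Finset.notMem_erase _ _),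
      add_eq_zero_iff_eq_neg] at sum_f
    simp only [id_eq] at sum_f
    rw [sum_f]
    refine neg_mem (sum_mem fun c hc => smul_mem _ _ (subset_span ?_))
    have hcS : c ∈ T := supp_f (Finset.erase_subset _ _ hc)
    exact hcS.resolve_left (Finset.ne_of_mem_erase hc)
  -- linear independence of φ(S) over K
  have hSR : LinearIndependent R (φ ∘ ((↑) : S → (ι → R))) :=
    hS.map' φ (LinearMap.ker_eq_bot.mpr hφ)
  have hSK : LinearIndependent K (φ ∘ ((↑) : S → (ι → R))) :=
    (LinearIndependent.iff_fractionRing R K).mp hSR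
  let W : Submodule K (ι → K) := span K (Set.range (φ ∘ ((↑) : S → (ι → R))))
  let b : Module.Basis S K W := Module.Basis.span hSK
  have hrange : Set.range (φ ∘ ((↑) : S → (ι → R))) = φ '' S := by
    rw [Set.range_comp, Subtype.range_coe]
  -- every φ(v) lies in W
  have hmemW : ∀ v : ι → R, φ v ∈ W := by
    intro v
    obtain ⟨r, hr, hrv⟩ := hstep v
    have h1 : φ (r • v) ∈ W := by
      have h2 : φ (r • v) ∈ span R (φ '' S) := by
        rw [← Submodule.map_span]
        exact Submodule.mem_map_of_mem hrv
      have h3 := Submodule.span_subset_span R K (φ '' S) h2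
      simpa only [W, hrange, SetLike.mem_coe] using h3
    have h2 : φ (r • v) = algebraMap R K r • φ v := by
      funext i
      simp [hφapp, Algebra.smul_def]
    have hr' : algebraMap R K r ≠ 0 := fun h =>
      hr (IsFractionRing.injective R K (by simpa using h))
    have h4 := W.smul_mem (algebraMap R K r)⁻¹ (h2 ▸ h1)
    rwa [smul_smul, inv_mul_cancel₀ hr', one_smul] at h4
  -- cardinal upper bound for (ι → R)
  have hW1 : #(ι → R) ≤ #W :=
    Cardinal.mk_le_of_injective (f := fun v : (ι → R) => (⟨φ v, hmemW v⟩ : W))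
      (fun x y h => hφ (congr_arg Subtype.val h))
  have hW2 : #W = #(S →₀ K) := b.repr.toEquiv.cardinal_eq
  -- Vandermonde lower bound : #R ≤ #S
  have hRS : #R ≤ #S := by
    let e := Infinite.natEmbedding ι
    let w : R → (ι → R) := fun t => Function.extend e (fun n => t ^ n) 0
    have hw : LinearIndependent K (fun t : R => φ (w t)) := by
      apply LinearIndependent.of_comp (LinearMap.funLeft K K e)
      have hcomp : (⇑(LinearMap.funLeft K K e)) ∘ (fun t : R => φ (w t))
           = (fun (x : K) (n : ℕ) => x ^ n) ∘ (algebraMap R K) := by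
        funext t
        funext n
        simp only [Function.comp_apply, LinearMap.funLeft_apply, hφapp]
        rw [show w t (e n) = t ^ n from Function.Injective.extend_apply e.injective _ _ _,
          map_pow]
      rw [hcomp]
      exact (linearIndependent_geom_aux K).comp _ (IsFractionRing.injective R K)
    have hwW : LinearIndependent K (fun t : R => (⟨φ (w t), hmemW (w t)⟩ : W)) :=
      LinearIndependent.of_comp W.subtype hw
    have h5 := hwW.cardinal_le_rank
    rwa [← b.mk_eq_rank''] at h5
  have hKR : #K ≤ #R := IsLocalization.cardinalMk_le (R := R) (nonZeroDivisors R)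
  have hbig : ℵ₀ < #(ι → R) := by
    have h2R : (2 : Cardinal) ≤ #R := Cardinal.two_le_iff.mpr ⟨0, 1, zero_ne_one⟩
    calc ℵ₀ < 2 ^ ℵ₀ := Cardinal.cantor ℵ₀
      _ ≤ 2 ^ #ι := Cardinal.power_le_power_left two_ne_zero (Cardinal.aleph0_le_mk ι)
      _ ≤ #R ^ #ι := Cardinal.power_le_power_right h2R
      _ = #(ι → R) := Cardinal.power_def R ι
  refine le_antisymm (Cardinal.mk_set_le S) ?_
  rcases finite_or_infinite S with hfin | hinf
  · -- S finite forces everything finite, contradiction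
    exfalso
    haveI : Finite S := hfin
    have hSfin : #S < ℵ₀ := Cardinal.lt_aleph0_of_finite _
    have hRfin : #R < ℵ₀ := lt_of_le_of_lt hRS hSfin
    have hKfin : #K < ℵ₀ := lt_of_le_of_lt hKR hRfin
    haveI : Finite K := Cardinal.lt_aleph0_iff_finite.mp hKfin
    have hfsfin : #(S →₀ K) ≤ #(S → K) :=
      Cardinal.mk_le_of_injective (DFunLike.coe_injective)
    have : #(ι → R) < ℵ₀ :=
      lt_of_le_of_lt ((hW1.trans hW2.le).trans hfsfin) (Cardinal.lt_aleph0_of_finite _)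
    exact absurd this (not_lt.mpr hbig.le)
  · haveI := hinf
    have hfs : #(S →₀ K) = max #S #K := Cardinal.mk_finsupp_of_infinite S K
    have h3 : #(ι → R) ≤ max #S #K := by
      rw [← hfs, ← hW2]; exact hW1
    have h4 : #K ≤ #S := hKR.trans hRS
    rwa [max_eq_left h4] at h3
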